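/- Let W : ℝ² → ℝ² be continuously differentiable with compact support, let Δ ⊂ ℝ² be a bounded measurable set, let f : ℝ² → ℝ² be continuously differentiable (independent of t), and let φ : ℝ × ℝ² → ℝ² be twice continuously differentiable. Write φ = φ(0, ·) and φ̇(x) = d/dt|_{t=0} φ(t, F_t(x)). Then the map t ↦ ∫_{F_t(Δ)} − f(y) · φ(t,·)(y) dy is differentiable at t = 0 and its derivative equals ∫_Δ [ − (∇f(x) W(x)) · φ(x) − f(x) · φ̇(x) + div W(x) · ( − f(x) · φ(x) ) ] dx. -/

import Mathlib

open MeasureTheory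
open scoped RealInnerProductSpace

/-- Jacobian matrix of a vector field on `ℝ²`: `(jac v x) i j = ∂ v_i / ∂ x_j`. -/
noncomputable def jac (v : EuclideanSpace ℝ (Fin 2) → EuclideanSpace ℝ (Fin 2))
    (x : EuclideanSpace ℝ (Fin 2)) : Matrix (Fin 2) (Fin 2) ℝ :=
  Matrix.of fun i j => fderiv ℝ v x (EuclideanSpace.single j (1 : ℝ)) i

/-- Divergence of a vector field: the trace of its Jacobian. -/
noncomputable def divg (v : EuclideanSpace ℝ (Fin 2) → EuclideanSpace ℝ (Fin 2))
    (x : EuclideanSpace ℝ (Fin 2)) : ℝ :=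
  Matrix.trace (jac v x)

section Aux

abbrev E2 := EuclideanSpace ℝ (Fin 2)

lemma coord_abs_le_norm (v : E2) (i : Fin 2) : |v i| ≤ ‖v‖ := by
  have h := abs_real_inner_le_norm (EuclideanSpace.single i (1:ℝ)) v
  simpa [EuclideanSpace.inner_single_left, EuclideanSpace.norm_single] using h

lemma det_formula (A : E2 →L[ℝ] E2) (t : ℝ) :
    (ContinuousLinearMap.id ℝ E2 + t • A).det
      = 1 + t * Matrix.trace (Matrix.of fun i j => A (EuclideanSpace.single j 1) i)
        + t ^ 2 * Matrix.det (Matrix.of fun i j => A (EuclideanSpace.single j 1) i) := by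
  set M : Matrix (Fin 2) (Fin 2) ℝ := Matrix.of fun i j => A (EuclideanSpace.single j 1) i with hM
  rw [ContinuousLinearMap.det, ← LinearMap.det_toMatrix (EuclideanSpace.basisFun (Fin 2) ℝ).toBasis]
  have hmat : LinearMap.toMatrix (EuclideanSpace.basisFun (Fin 2) ℝ).toBasis
      (EuclideanSpace.basisFun (Fin 2) ℝ).toBasis
      ((ContinuousLinearMap.id ℝ E2 + t • A : E2 →L[ℝ] E2) : E2 →ₗ[ℝ] E2) = 1 + t • M := by
    ext i j
    simp [LinearMap.toMatrix_apply, OrthonormalBasis.coe_toBasis_repr_apply,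
      EuclideanSpace.basisFun_repr, EuclideanSpace.basisFun_apply, hM, Matrix.one_apply,
      EuclideanSpace.single_apply]
  rw [hmat, Matrix.det_fin_two, Matrix.trace_fin_two, Matrix.det_fin_two]
  simp [Matrix.one_apply, Matrix.add_apply, Matrix.smul_apply, Fin.val_eq_zero]
  ring

lemma jac_eq (W : E2 → E2) (x : E2) :
    jac W x = Matrix.of fun i j => (fderiv ℝ W x) (EuclideanSpace.single j 1) i := rfl

end Aux

set_option maxHeartbeats 4000000 in
/-- Shape derivative of the force term
`t ↦ ∫_{F_t(Δ)} − f · φ(t,·) dy`, where `f` is shape independent. -/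
theorem shape_derivative_L5
    (W : EuclideanSpace ℝ (Fin 2) → EuclideanSpace ℝ (Fin 2))
    (hW : ContDiff ℝ 1 W) (hWc : HasCompactSupport W)
    (Δ : Set (EuclideanSpace ℝ (Fin 2))) (hΔm : MeasurableSet Δ)
    (hΔb : Bornology.IsBounded Δ)
    (f : EuclideanSpace ℝ (Fin 2) → EuclideanSpace ℝ (Fin 2)) (hf : ContDiff ℝ 1 f)
    (φ : ℝ × EuclideanSpace ℝ (Fin 2) → EuclideanSpace ℝ (Fin 2)) (hφ : ContDiff ℝ 2 φ)
    (φ₀ φdot : EuclideanSpace ℝ (Fin 2) → EuclideanSpace ℝ (Fin 2))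
    (hφ₀ : φ₀ = fun z => φ ((0 : ℝ), z))
    (hφdot : φdot = fun z => deriv (fun t : ℝ => φ (t, z + t • W z)) 0) :
    HasDerivAt
      (fun t : ℝ => ∫ y in (fun x => x + t • W x) '' Δ, -⟪f y, φ (t, y)⟫)
      (∫ x in Δ,
        (-⟪fderiv ℝ f x (W x), φ₀ x⟫
          - ⟪f x, φdot x⟫
          + divg W x * (-⟪f x, φ₀ x⟫))) (0 : ℝ) := by
  classical
  -- basic differentiability facts
  have hfd : Differentiable ℝ f := hf.differentiable one_ne_zero
  have hφd : Differentiable ℝ φ := hφ.differentiable (by norm_num)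
  have hWd : Differentiable ℝ W := hW.differentiable one_ne_zero
  -- constants
  obtain ⟨L, hL⟩ := hW.lipschitzWith_of_hasCompactSupport hWc one_ne_zero
  obtain ⟨CW, hCW⟩ := hWc.exists_bound_of_continuous hW.continuous
  have hCW0 : (0:ℝ) ≤ CW := le_trans (norm_nonneg _) (hCW 0)
  obtain ⟨CA, hCA⟩ := (hWc.fderiv ℝ).exists_bound_of_continuous (hW.continuous_fderiv one_ne_zero)
  have hCA0 : (0:ℝ) ≤ CA := le_trans (norm_nonneg _) (hCA 0)
  -- abbreviations
  set tr : E2 → ℝ := fun x => Matrix.trace (jac W x) with htr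
  set dd : E2 → ℝ := fun x => Matrix.det (jac W x) with hdd
  set g : ℝ → E2 → ℝ := fun t x => -⟪f (x + t • W x), φ (t, x + t • W x)⟫ with hg
  set d : ℝ → E2 → ℝ := fun t x => 1 + t * tr x + t ^ 2 * dd x with hd
  set g' : ℝ → E2 → ℝ := fun t x =>
    -(⟪f (x + t • W x), fderiv ℝ φ (t, x + t • W x) (1, W x)⟫
      + ⟪fderiv ℝ f (x + t • W x) (W x), φ (t, x + t • W x)⟫) with hg'
  set F' : ℝ → E2 → ℝ := fun t x => (tr x + 2 * t * dd x) * g t x + d t x * g' t x with hF'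
  -- entry bounds
  have hent : ∀ (x : E2) (i j : Fin 2), |jac W x i j| ≤ CA := by
    intro x i j
    refine (coord_abs_le_norm _ i).trans ?_
    calc ‖(fderiv ℝ W x) (EuclideanSpace.single j (1:ℝ))‖
        ≤ ‖fderiv ℝ W x‖ * ‖EuclideanSpace.single j (1:ℝ)‖ := (fderiv ℝ W x).le_opNorm _
      _ ≤ CA * 1 := by
          rw [EuclideanSpace.norm_single, norm_one]
          exact mul_le_mul_of_nonneg_right (hCA x) (by norm_num)
      _ = CA := mul_one _
  have htrb : ∀ x, |tr x| ≤ 2 * CA := by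
    intro x
    rw [htr]
    simp only [Matrix.trace_fin_two]
    calc |jac W x 0 0 + jac W x 1 1| ≤ |jac W x 0 0| + |jac W x 1 1| := abs_add_le _ _
      _ ≤ CA + CA := add_le_add (hent x 0 0) (hent x 1 1)
      _ = 2 * CA := by ring
  have hddb : ∀ x, |dd x| ≤ 2 * CA ^ 2 := by
    intro x
    rw [hdd]
    simp only [Matrix.det_fin_two]
    calc |jac W x 0 0 * jac W x 1 1 - jac W x 0 1 * jac W x 1 0|
        ≤ |jac W x 0 0 * jac W x 1 1| + |jac W x 0 1 * jac W x 1 0| := abs_sub _ _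
      _ ≤ CA * CA + CA * CA := by
          rw [abs_mul, abs_mul]
          exact add_le_add (mul_le_mul (hent x 0 0) (hent x 1 1) (abs_nonneg _) hCA0)
            (mul_le_mul (hent x 0 1) (hent x 1 0) (abs_nonneg _) hCA0)
      _ = 2 * CA ^ 2 := by ring
  -- choice of ε
  have hDpos : (0:ℝ) < 2 * (2 * CA + 2 * CA ^ 2) + 1 := by nlinarith [hCA0, sq_nonneg CA]
  have hLpos : (0:ℝ) < (L:ℝ) + 1 := by positivity
  set ε : ℝ := min (min 1 (1 / (2 * (2 * CA + 2 * CA ^ 2) + 1))) (1 / ((L:ℝ) + 1)) with hε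
  have hεpos : 0 < ε := by
    refine lt_min (lt_min one_pos ?_) ?_ <;> positivity
  have hε1 : ε ≤ 1 := (min_le_left _ _).trans (min_le_left _ _)
  have hε2 : ε ≤ 1 / (2 * (2 * CA + 2 * CA ^ 2) + 1) := (min_le_left _ _).trans (min_le_right _ _)
  have hε3 : ε ≤ 1 / ((L:ℝ) + 1) := min_le_right _ _
  have habs : ∀ t ∈ Metric.ball (0:ℝ) ε, |t| < ε := by
    intro t ht
    rwa [Metric.mem_ball, Real.dist_eq, sub_zero] at ht
  -- positivity of d
  have hdpos : ∀ t ∈ Metric.ball (0:ℝ) ε, ∀ x, 0 < d t x := by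
    intro t ht x
    have h1 : |t| < ε := habs t ht
    have ht1 : |t| ≤ 1 := h1.le.trans hε1
    have key : |t| * (2 * (2 * CA + 2 * CA ^ 2) + 1) ≤ 1 := by
      have := h1.le.trans hε2
      rw [le_div_iff₀ hDpos] at this
      exact this
    have e1 : -(|t| * (2 * CA)) ≤ t * tr x := by
      have h2 := neg_abs_le (t * tr x)
      rw [abs_mul] at h2
      nlinarith [abs_nonneg t, htrb x, abs_nonneg (tr x)]
    have e2 : -(|t| * (2 * CA ^ 2)) ≤ t ^ 2 * dd x := by
      have h2 := neg_abs_le (t ^ 2 * dd x)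
      rw [abs_mul, abs_pow, sq_abs] at h2
      have h3 : t ^ 2 * |dd x| ≤ t ^ 2 * (2 * CA ^ 2) :=
        mul_le_mul_of_nonneg_left (hddb x) (sq_nonneg t)
      have h4 : |t| ^ 2 ≤ |t| * 1 := by
        rw [sq]
        exact mul_le_mul_of_nonneg_left ht1 (abs_nonneg t)
      rw [mul_one] at h4
      have h5 : t ^ 2 ≤ |t| := by rwa [← sq_abs t]
      nlinarith [abs_nonneg t, sq_nonneg CA]
    show (0:ℝ) < 1 + t * tr x + t ^ 2 * dd x
    have key' : 4 * (|t| * CA) + 4 * (|t| * CA ^ 2) + |t| ≤ 1 := by nlinarith [key]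
    nlinarith [abs_nonneg t, e1, e2, key']
  -- curve derivative
  have hcurve : ∀ (x : E2) (t : ℝ), HasDerivAt (fun s : ℝ => x + s • W x) (W x) t := by
    intro x t
    simpa using ((hasDerivAt_id t).smul_const (W x)).const_add x
  -- pointwise derivative of g
  have hderiv_g : ∀ (x : E2) (t : ℝ), HasDerivAt (fun s => g s x) (g' t x) t := by
    intro x t
    have h1 : HasDerivAt (fun s : ℝ => f (x + s • W x)) (fderiv ℝ f (x + t • W x) (W x)) t :=
      (hfd _).hasFDerivAt.comp_hasDerivAt t (hcurve x t)
    have hc2 : HasDerivAt (fun s : ℝ => ((s, x + s • W x) : ℝ × E2)) ((1 : ℝ), W x) t :=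
      (hasDerivAt_id t).prodMk (hcurve x t)
    have h2 : HasDerivAt (fun s : ℝ => φ (s, x + s • W x))
        (fderiv ℝ φ (t, x + t • W x) (1, W x)) t :=
      (hφd _).hasFDerivAt.comp_hasDerivAt t hc2
    have h3 := (h1.inner ℝ h2).neg
    simp only [hg, hg']
    refine h3.congr_deriv ?_
    ring
  have hderiv_d : ∀ (x : E2) (t : ℝ), HasDerivAt (fun s => d s x) (tr x + 2 * t * dd x) t := by
    intro x t
    have h1 : HasDerivAt (fun s : ℝ => s * tr x) (tr x) t := by
      simpa using (hasDerivAt_id t).mul_const (tr x)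
    have h2 : HasDerivAt (fun s : ℝ => s ^ 2 * dd x) (2 * t * dd x) t := by
      have := (hasDerivAt_pow 2 t).mul_const (dd x)
      simpa [pow_one, mul_assoc] using this
    have h3 := (h1.add h2).const_add 1
    rw [hd]
    refine h3.congr_of_eventuallyEq (Filter.Eventually.of_forall fun s => ?_)
    show 1 + s * tr x + s ^ 2 * dd x = 1 + (s * tr x + s ^ 2 * dd x)
    ring
  have hderiv : ∀ (x : E2) (t : ℝ), HasDerivAt (fun s => d s x * g s x) (F' t x) t := by
    intro x t
    exact (hderiv_d x t).mul (hderiv_g x t)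
  -- compact sets and bounds
  obtain ⟨R, hR⟩ := (Metric.isBounded_iff_subset_closedBall 0).1 hΔb
  set K : Set E2 := Metric.closedBall 0 (max R 0 + CW) with hK
  have hKc : IsCompact K := isCompact_closedBall _ _
  have hmemK : ∀ x ∈ Δ, ∀ t : ℝ, |t| ≤ 1 → x + t • W x ∈ K := by
    intro x hx t ht
    have h1 : ‖x‖ ≤ max R 0 := by
      have := hR hx
      rw [Metric.mem_closedBall, dist_zero_right] at this
      exact this.trans (le_max_left _ _)
    have h2 : ‖t • W x‖ ≤ CW := by
      rw [norm_smul, Real.norm_eq_abs]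
      calc |t| * ‖W x‖ ≤ 1 * CW :=
        mul_le_mul ht (hCW x) (norm_nonneg _) zero_le_one
      _ = CW := one_mul _
    rw [hK, Metric.mem_closedBall, dist_zero_right]
    calc ‖x + t • W x‖ ≤ ‖x‖ + ‖t • W x‖ := norm_add_le _ _
      _ ≤ max R 0 + CW := add_le_add h1 h2
  have h0K : (0 : E2) ∈ K := by
    rw [hK, Metric.mem_closedBall, dist_zero_right, norm_zero]
    positivity
  set K2 : Set (ℝ × E2) := Set.Icc (-1:ℝ) 1 ×ˢ K with hK2
  have hK2c : IsCompact K2 := isCompact_Icc.prod hKc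
  have h0K2 : ((0:ℝ), (0:E2)) ∈ K2 := by
    constructor
    · norm_num
    · exact h0K
  obtain ⟨Cf, hCf⟩ := hKc.exists_bound_of_continuousOn hf.continuous.continuousOn
  have hCf0 : (0:ℝ) ≤ Cf := le_trans (norm_nonneg _) (hCf 0 h0K)
  obtain ⟨Cf', hCf'⟩ := hKc.exists_bound_of_continuousOn (hf.continuous_fderiv one_ne_zero).continuousOn
  have hCf'0 : (0:ℝ) ≤ Cf' := le_trans (norm_nonneg _) (hCf' 0 h0K)
  obtain ⟨Cφ, hCφ⟩ := hK2c.exists_bound_of_continuousOn hφ.continuous.continuousOn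
  have hCφ0 : (0:ℝ) ≤ Cφ := le_trans (norm_nonneg _) (hCφ _ h0K2)
  obtain ⟨Cφ', hCφ'⟩ := hK2c.exists_bound_of_continuousOn
    ((hφ.continuous_fderiv (by norm_num)).continuousOn)
  have hCφ'0 : (0:ℝ) ≤ Cφ' := le_trans (norm_nonneg _) (hCφ' _ h0K2)
  set B : ℝ := (2 * CA + 4 * CA ^ 2) * (Cf * Cφ)
      + (1 + 2 * CA + 2 * CA ^ 2) * (Cf * (Cφ' * (1 + CW)) + Cf' * CW * Cφ) with hB
  -- the uniform bound
  have hbound : ∀ x ∈ Δ, ∀ t ∈ Metric.ball (0:ℝ) ε, |F' t x| ≤ B := by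
    intro x hx t ht
    have ht1 : |t| ≤ 1 := (habs t ht).le.trans hε1
    have hyK : x + t • W x ∈ K := hmemK x hx t ht1
    have hpK2 : ((t : ℝ), x + t • W x) ∈ K2 := by
      constructor
      · rw [Set.mem_Icc]
        constructor <;> [linarith [neg_abs_le t]; linarith [le_abs_self t]]
      · exact hyK
    have e3 : |g t x| ≤ Cf * Cφ := by
      rw [hg]
      simp only [abs_neg]
      calc |⟪f (x + t • W x), φ (t, x + t • W x)⟫|
          ≤ ‖f (x + t • W x)‖ * ‖φ (t, x + t • W x)‖ := abs_real_inner_le_norm _ _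
        _ ≤ Cf * Cφ := mul_le_mul (hCf _ hyK) (hCφ _ hpK2) (norm_nonneg _) hCf0
    have e4 : |g' t x| ≤ Cf * (Cφ' * (1 + CW)) + Cf' * CW * Cφ := by
      rw [hg']
      simp only [abs_neg]
      have t1 : |⟪f (x + t • W x), fderiv ℝ φ (t, x + t • W x) (1, W x)⟫|
          ≤ Cf * (Cφ' * (1 + CW)) := by
        calc |⟪f (x + t • W x), fderiv ℝ φ (t, x + t • W x) (1, W x)⟫|
            ≤ ‖f (x + t • W x)‖ * ‖fderiv ℝ φ (t, x + t • W x) (1, W x)‖ :=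
              abs_real_inner_le_norm _ _
          _ ≤ Cf * (Cφ' * (1 + CW)) := by
              refine mul_le_mul (hCf _ hyK) ?_ (norm_nonneg _) hCf0
              calc ‖fderiv ℝ φ (t, x + t • W x) (1, W x)‖
                  ≤ ‖fderiv ℝ φ (t, x + t • W x)‖ * ‖((1:ℝ), W x)‖ :=
                    (fderiv ℝ φ _).le_opNorm _
                _ ≤ Cφ' * (1 + CW) := by
                    refine mul_le_mul (hCφ' _ hpK2) ?_ (norm_nonneg _) hCφ'0
                    rw [Prod.norm_def]
                    simp only [norm_one]
                    exact max_le (by linarith) (by linarith [hCW x])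
      have t2 : |⟪fderiv ℝ f (x + t • W x) (W x), φ (t, x + t • W x)⟫|
          ≤ Cf' * CW * Cφ := by
        calc |⟪fderiv ℝ f (x + t • W x) (W x), φ (t, x + t • W x)⟫|
            ≤ ‖fderiv ℝ f (x + t • W x) (W x)‖ * ‖φ (t, x + t • W x)‖ :=
              abs_real_inner_le_norm _ _
          _ ≤ Cf' * CW * Cφ := by
              refine mul_le_mul ?_ (hCφ _ hpK2) (norm_nonneg _) (by positivity)
              calc ‖fderiv ℝ f (x + t • W x) (W x)‖
                  ≤ ‖fderiv ℝ f (x + t • W x)‖ * ‖W x‖ := (fderiv ℝ f _).le_opNorm _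
                _ ≤ Cf' * CW := mul_le_mul (hCf' _ hyK) (hCW x) (norm_nonneg _) hCf'0
      calc |⟪f (x + t • W x), fderiv ℝ φ (t, x + t • W x) (1, W x)⟫
            + ⟪fderiv ℝ f (x + t • W x) (W x), φ (t, x + t • W x)⟫|
          ≤ _ + _ := abs_add_le _ _
        _ ≤ Cf * (Cφ' * (1 + CW)) + Cf' * CW * Cφ := add_le_add t1 t2
    have e1 : |tr x + 2 * t * dd x| ≤ 2 * CA + 4 * CA ^ 2 := by
      calc |tr x + 2 * t * dd x| ≤ |tr x| + |2 * t * dd x| := abs_add_le _ _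
        _ ≤ 2 * CA + 4 * CA ^ 2 := by
            refine add_le_add (htrb x) ?_
            rw [abs_mul, abs_mul, abs_two]
            nlinarith [hddb x, abs_nonneg t, abs_nonneg (dd x), sq_nonneg CA]
    have e2 : |d t x| ≤ 1 + 2 * CA + 2 * CA ^ 2 := by
      rw [hd]
      calc |1 + t * tr x + t ^ 2 * dd x|
          ≤ |(1:ℝ)| + |t * tr x| + |t ^ 2 * dd x| :=
            (abs_add_le _ _).trans (add_le_add (abs_add_le _ _) le_rfl)
        _ ≤ 1 + 2 * CA + 2 * CA ^ 2 := by
            rw [abs_one, abs_mul, abs_mul, abs_pow, sq_abs]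
            refine add_le_add (add_le_add le_rfl ?_) ?_
            · nlinarith [htrb x, abs_nonneg t, abs_nonneg (tr x), hCA0]
            · have ht2 : t ^ 2 ≤ 1 := by
                rw [← sq_abs]
                nlinarith [abs_nonneg t]
              have h7 : t ^ 2 * |dd x| ≤ t ^ 2 * (2 * CA ^ 2) :=
                mul_le_mul_of_nonneg_left (hddb x) (sq_nonneg t)
              nlinarith [sq_nonneg CA, sq_nonneg t, abs_nonneg (dd x)]
    calc |F' t x| ≤ |tr x + 2 * t * dd x| * |g t x| + |d t x| * |g' t x| := by
          rw [hF']
          exact (abs_add_le _ _).trans (by rw [abs_mul, abs_mul])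
      _ ≤ B := by
          rw [hB]
          refine add_le_add (mul_le_mul e1 e3 (abs_nonneg _) (by nlinarith [sq_nonneg CA]))
            (mul_le_mul e2 e4 (abs_nonneg _) (by nlinarith [sq_nonneg CA]))
  -- continuity in x
  have hjc : Continuous (fun x => jac W x) := by
    refine continuous_matrix fun i j => ?_
    exact (EuclideanSpace.proj i).continuous.comp
      ((hW.continuous_fderiv one_ne_zero).clm_apply continuous_const)
  have htrc : Continuous tr := hjc.matrix_trace
  have hddc : Continuous dd := hjc.matrix_det
  have hcurvec : ∀ t : ℝ, Continuous (fun x : E2 => x + t • W x) := fun t =>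
    continuous_id.add (hW.continuous.const_smul t)
  have hgc : ∀ t, Continuous (g t) := fun t =>
    ((hf.continuous.comp (hcurvec t)).inner
      (hφ.continuous.comp (continuous_const.prodMk (hcurvec t)))).neg
  have hdc : ∀ t, Continuous (d t) := fun t =>
    (continuous_const.add (continuous_const.mul htrc)).add (continuous_const.mul hddc)
  have hg'c : ∀ t, Continuous (g' t) := by
    intro t
    refine Continuous.neg (Continuous.add ?_ ?_)
    · exact (hf.continuous.comp (hcurvec t)).inner
        ((((hφ.continuous_fderiv (by norm_num)).comp
          (continuous_const.prodMk (hcurvec t))).clm_apply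
          (continuous_const.prodMk hW.continuous)))
    · exact (((hf.continuous_fderiv one_ne_zero).comp (hcurvec t)).clm_apply hW.continuous).inner
        (hφ.continuous.comp (continuous_const.prodMk (hcurvec t)))
  have hF'c : Continuous (F' 0) := by
    rw [hF']
    exact ((htrc.add ((continuous_const.mul continuous_const).mul hddc)).mul (hgc 0)).add
      ((hdc 0).mul (hg'c 0))
  -- dominated differentiation
  have hμ : volume Δ < ⊤ := hΔb.measure_lt_top
  have key := hasDerivAt_integral_of_dominated_loc_of_deriv_le (μ := volume.restrict Δ)
    (F := fun t x => d t x * g t x) (F' := F') (x₀ := (0:ℝ)) (bound := fun _ => B) (Metric.ball_mem_nhds (0:ℝ) hεpos)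
    (Filter.Eventually.of_forall fun t => ((hdc t).mul (hgc t)).aestronglyMeasurable)
    ?_ (hF'c.aestronglyMeasurable) ?_ ?_ ?_
  · -- finish: identify the function and the derivative
    obtain ⟨-, hG⟩ := key
    -- identify derivative integrand
    have hint : ∀ x : E2, F' 0 x
        = -⟪fderiv ℝ f x (W x), φ₀ x⟫ - ⟪f x, φdot x⟫ + divg W x * (-⟪f x, φ₀ x⟫) := by
      intro x
      have hzero : x + (0:ℝ) • W x = x := by simp
      have hφdotx : φdot x = fderiv ℝ φ ((0:ℝ), x) (1, W x) := by
        rw [hφdot]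
        have h2 : HasDerivAt (fun s : ℝ => φ (s, x + s • W x))
            (fderiv ℝ φ ((0:ℝ), x + (0:ℝ) • W x) (1, W x)) 0 :=
          (hφd _).hasFDerivAt.comp_hasDerivAt 0 ((hasDerivAt_id 0).prodMk (hcurve x 0))
        rw [hzero] at h2
        exact h2.deriv
      have hdivg : divg W x = tr x := by rw [htr]; rfl
      have hg0 : g 0 x = -⟪f x, φ₀ x⟫ := by rw [hg, hφ₀]; simp
      have hg'0 : g' 0 x
          = -(⟪f x, fderiv ℝ φ ((0:ℝ), x) (1, W x)⟫ + ⟪fderiv ℝ f x (W x), φ₀ x⟫) := by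
        rw [hg', hφ₀]; simp
      have hd0 : d 0 x = 1 := by rw [hd]; simp
      have hF'0 : F' 0 x = tr x * g 0 x + d 0 x * g' 0 x := by rw [hF']; norm_num
      rw [hF'0, hg0, hg'0, hd0, hφdotx, hdivg]
      ring
    have hGid : (∫ x in Δ, F' 0 x)
        = ∫ x in Δ, (-⟪fderiv ℝ f x (W x), φ₀ x⟫ - ⟪f x, φdot x⟫
            + divg W x * (-⟪f x, φ₀ x⟫)) :=
      integral_congr_ae (Filter.Eventually.of_forall fun x => hint x)
    rw [hGid] at hG
    -- eventual equality with the original function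
    have hfderiv_t : ∀ (t : ℝ) (x : E2), HasFDerivAt (fun x : E2 => x + t • W x)
        (ContinuousLinearMap.id ℝ E2 + t • fderiv ℝ W x) x := fun t x =>
      (hasFDerivAt_id x).add (((hWd x).hasFDerivAt).const_smul t)
    have hinj : ∀ t ∈ Metric.ball (0:ℝ) ε, Set.InjOn (fun x : E2 => x + t • W x) Δ := by
      intro t ht x _ y _ hxy
      simp only at hxy
      have h1 : x - y = t • W y - t • W x :=
        sub_eq_sub_iff_add_eq_add.2 (hxy.trans (add_comm _ _))
      have h3 : ‖W y - W x‖ ≤ (L:ℝ) * ‖x - y‖ := by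
        have h4 := hL.dist_le_mul y x
        rw [dist_eq_norm, dist_eq_norm] at h4
        calc ‖W y - W x‖ ≤ (L:ℝ) * ‖y - x‖ := h4
          _ = (L:ℝ) * ‖x - y‖ := by rw [norm_sub_rev]
      have h2 : ‖x - y‖ ≤ |t| * ((L:ℝ) * ‖x - y‖) := by
        calc ‖x - y‖ = |t| * ‖W y - W x‖ := by
              rw [h1, ← smul_sub, norm_smul, Real.norm_eq_abs]
          _ ≤ |t| * ((L:ℝ) * ‖x - y‖) := mul_le_mul_of_nonneg_left h3 (abs_nonneg t)
      have h5 : |t| * (L:ℝ) < 1 := by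
        have h6 : |t| < ε := habs t ht
        have h7 : |t| * ((L:ℝ) + 1) < 1 := by
          calc |t| * ((L:ℝ) + 1) < ε * ((L:ℝ) + 1) :=
            mul_lt_mul_of_pos_right h6 hLpos
          _ ≤ (1 / ((L:ℝ) + 1)) * ((L:ℝ) + 1) := mul_le_mul_of_nonneg_right hε3 hLpos.le
          _ = 1 := by field_simp
        nlinarith [abs_nonneg t]
      have h8 : ‖x - y‖ = 0 := by nlinarith [norm_nonneg (x - y)]
      exact sub_eq_zero.1 (norm_eq_zero.1 h8)
    have heq : ∀ t ∈ Metric.ball (0:ℝ) ε,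
        (∫ y in (fun x => x + t • W x) '' Δ, -⟪f y, φ (t, y)⟫) = ∫ x in Δ, d t x * g t x := by
      intro t ht
      rw [integral_image_eq_integral_abs_det_fderiv_smul volume hΔm
        (fun x _ => (hfderiv_t t x).hasFDerivWithinAt) (hinj t ht)
        (fun y => -⟪f y, φ (t, y)⟫)]
      refine integral_congr_ae (Filter.Eventually.of_forall fun x => ?_)
      show |(ContinuousLinearMap.id ℝ E2 + t • fderiv ℝ W x).det|
          • (-⟪f (x + t • W x), φ (t, x + t • W x)⟫) = d t x * g t x
      rw [det_formula, smul_eq_mul]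
      rw [show (Matrix.of fun i j => (fderiv ℝ W x) (EuclideanSpace.single j 1) i) = jac W x
        from rfl]
      rw [show (1 + t * Matrix.trace (jac W x) + t ^ 2 * (jac W x).det) = d t x from rfl]
      rw [abs_of_pos (hdpos t ht x)]
    have hEv : (fun t : ℝ => ∫ y in (fun x => x + t • W x) '' Δ, -⟪f y, φ (t, y)⟫)
        =ᶠ[nhds (0:ℝ)] (fun t => ∫ x in Δ, d t x * g t x) := by
      filter_upwards [Metric.ball_mem_nhds (0:ℝ) hεpos] with t ht
      exact heq t ht
    exact hG.congr_of_eventuallyEq hEv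
  · -- integrability of F 0
    have h1 : IntegrableOn (fun x => d 0 x * g 0 x) (closure Δ) :=
      ((hdc 0).mul (hgc 0)).continuousOn.integrableOn_compact hΔb.isCompact_closure
    exact h1.mono_set subset_closure
  · -- a.e. bound
    rw [ae_restrict_iff' hΔm]
    refine Filter.Eventually.of_forall fun x hx => fun t ht => ?_
    rw [Real.norm_eq_abs]
    exact hbound x hx t ht
  · -- integrability of the bound
    exact integrableOn_const hμ.ne
  · -- a.e. differentiability
    exact Filter.Eventually.of_forall fun x t _ => hderiv x t
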